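/- Let q be a real number with 0 < q < 1 and let z ∈ ℂ with −1 < Re(z) < 1. Let η_z ∈ ℓ²(ℕ; ℂ) be the vector with coordinates (p_n(z))_{n ∈ ℕ}, and let a be the bounded operator on ℓ²(ℕ; ℂ) defined by (a ξ)(n) = √(1 − q^{2(n+1)}) ξ(n+1), with adjoint a*. Then η_z is an eigenvector of q^{−1} a + q a* with eigenvalue q^z + q^{−z}: (q^{−1} a + q a*) η_z = (q^z + q^{−z}) η_z. -/

import Mathlib

/-- The q-Pochhammer symbol `(x; q)_k = ∏_{j=0}^{k-1} (1 - x q^j)`. -/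
noncomputable def qPoch (x q : ℝ) (k : ℕ) : ℝ := ∏ j ∈ Finset.range k, (1 - x * q ^ j)

/-- The q-binomial coefficient `[n, k]_q = (q; q)_n / ((q; q)_k (q; q)_{n-k})`. -/
noncomputable def qbinom (q : ℝ) (n k : ℕ) : ℝ :=
  qPoch q q n / (qPoch q q k * qPoch q q (n - k))

/-- `q^z = exp(z · log q)` for a real `q > 0` and complex `z`. -/
noncomputable def cpw (q : ℝ) (z : ℂ) : ℂ := Complex.exp (z * (Real.log q : ℂ))

/-- `p_n(z) = (q^n / √((q²; q²)_n)) · Σ_{k=0}^{n} [n, k]_{q²} · q^{z(n-2k)}`. -/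
noncomputable def pfun (q : ℝ) (n : ℕ) (z : ℂ) : ℂ :=
  ((q ^ n / Real.sqrt (qPoch (q ^ 2) (q ^ 2) n) : ℝ) : ℂ) *
    ∑ k ∈ Finset.range (n + 1),
      (qbinom (q ^ 2) n k : ℂ) * cpw q (z * ((n : ℂ) - 2 * (k : ℂ)))


lemma qPoch_succ (x q : ℝ) (k : ℕ) :
    qPoch x q (k + 1) = qPoch x q k * (1 - x * q ^ k) := Finset.prod_range_succ _ _

lemma qPoch_pos {Q : ℝ} (h0 : 0 < Q) (h1 : Q < 1) (k : ℕ) : 0 < qPoch Q Q k := by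
  apply Finset.prod_pos
  intro j _
  have : Q * Q ^ j ≤ Q * 1 := by
    apply mul_le_mul_of_nonneg_left _ h0.le
    exact pow_le_one₀ h0.le h1.le
  nlinarith


lemma one_sub_pow_pos {Q : ℝ} (h0 : 0 < Q) (h1 : Q < 1) (m : ℕ) : 0 < 1 - Q * Q ^ m := by
  have : Q * Q ^ m ≤ Q * 1 := by
    apply mul_le_mul_of_nonneg_left _ h0.le
    exact pow_le_one₀ h0.le h1.le
  nlinarith

lemma qPoch_le_one {Q : ℝ} (h0 : 0 < Q) (h1 : Q < 1) (k : ℕ) : qPoch Q Q k ≤ 1 := by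
  apply Finset.prod_le_one
  · intro j _
    exact (one_sub_pow_pos h0 h1 j).le
  · intro j _
    have : 0 < Q * Q ^ j := by positivity
    linarith

lemma qbinom_zero {Q : ℝ} (h0 : 0 < Q) (h1 : Q < 1) (n : ℕ) : qbinom Q n 0 = 1 := by
  unfold qbinom
  simp only [qPoch, Finset.range_zero, Finset.prod_empty, one_mul, Nat.sub_zero]
  exact div_self (ne_of_gt (qPoch_pos h0 h1 n))

lemma qbinom_self {Q : ℝ} (h0 : 0 < Q) (h1 : Q < 1) (n : ℕ) : qbinom Q n n = 1 := by
  unfold qbinom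
  simp only [Nat.sub_self, qPoch, Finset.range_zero, Finset.prod_empty, mul_one]
  exact div_self (ne_of_gt (qPoch_pos h0 h1 n))

lemma qbinom_key {Q : ℝ} (h0 : 0 < Q) (h1 : Q < 1) {n k : ℕ} (hk : k ≤ n) :
    qbinom Q (n + 2) (k + 1)
      = qbinom Q (n + 1) (k + 1) + qbinom Q (n + 1) k - (1 - Q ^ (n + 1)) * qbinom Q n k := by
  obtain ⟨d, rfl⟩ := Nat.exists_eq_add_of_le hk
  unfold qbinom
  have e1 : k + d + 2 - (k + 1) = d + 1 := by omega
  have e2 : k + d + 1 - (k + 1) = d := by omega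
  have e3 : k + d + 1 - k = d + 1 := by omega
  have e4 : k + d - k = d := by omega
  rw [e1, e2, e3, e4]
  have hPk := qPoch_pos h0 h1 k
  have hPd := qPoch_pos h0 h1 d
  have hPkd := qPoch_pos h0 h1 (k + d)
  have hk1 := one_sub_pow_pos h0 h1 k
  have hd1 := one_sub_pow_pos h0 h1 d
  have hkd1 := one_sub_pow_pos h0 h1 (k + d)
  have hkd2 := one_sub_pow_pos h0 h1 (k + d + 1)
  have r1 : qPoch Q Q (k + d + 2) = qPoch Q Q (k + d) * (1 - Q * Q ^ (k + d)) * (1 - Q * Q ^ (k + d + 1)) := by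
    rw [show k + d + 2 = (k + d + 1) + 1 by ring, qPoch_succ, qPoch_succ]
  have r2 : qPoch Q Q (k + d + 1) = qPoch Q Q (k + d) * (1 - Q * Q ^ (k + d)) := qPoch_succ _ _ _
  have r3 : qPoch Q Q (k + 1) = qPoch Q Q k * (1 - Q * Q ^ k) := qPoch_succ _ _ _
  have r4 : qPoch Q Q (d + 1) = qPoch Q Q d * (1 - Q * Q ^ d) := qPoch_succ _ _ _
  have h5 : (1 : ℝ) - Q ^ (k + d + 1) = 1 - Q * Q ^ (k + d) := by ring
  rw [r1, r2, r3, r4, h5]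
  field_simp
  ring

lemma one_sub_ge_exp {Q x : ℝ} (h0 : 0 < Q) (h1 : Q < 1) (hx0 : 0 ≤ x) (hxQ : x ≤ Q) :
    Real.exp (-(x / (1 - Q))) ≤ 1 - x := by
  have hQ1 : 0 < 1 - Q := by linarith
  have hx1 : 0 < 1 - x := by linarith
  have h2 : 1 / (1 - x) ≤ 1 + x / (1 - Q) := by
    rw [div_le_iff₀ hx1]
    have h : x * (Q - x) ≥ 0 := by nlinarith
    have : (1 + x / (1 - Q)) * (1 - x) = ((1 - Q + x) * (1 - x)) / (1 - Q) := by
      field_simp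
    rw [this, le_div_iff₀ hQ1]
    nlinarith
  have h3 : 1 + x / (1 - Q) ≤ Real.exp (x / (1 - Q)) := by
    have := Real.add_one_le_exp (x / (1 - Q))
    linarith
  rw [Real.exp_neg]
  rw [inv_le_comm₀ (Real.exp_pos _) hx1]
  calc (1 - x)⁻¹ = 1 / (1 - x) := by rw [one_div]
  _ ≤ 1 + x / (1 - Q) := h2
  _ ≤ _ := h3

lemma qPoch_lower {Q : ℝ} (h0 : 0 < Q) (h1 : Q < 1) (k : ℕ) :
    Real.exp (-(Q / ((1 - Q) * (1 - Q)))) ≤ qPoch Q Q k := by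
  have hQ1 : 0 < 1 - Q := by linarith
  have step : ∀ m, Real.exp (-(∑ j ∈ Finset.range m, Q * Q ^ j / (1 - Q))) ≤ qPoch Q Q m := by
    intro m
    induction m with
    | zero => simp [qPoch]
    | succ m ih =>
      rw [qPoch_succ, Finset.sum_range_succ, neg_add, Real.exp_add]
      have h4 : Real.exp (-(Q * Q ^ m / (1 - Q))) ≤ 1 - Q * Q ^ m := by
        apply one_sub_ge_exp h0 h1 (by positivity)
        calc Q * Q ^ m ≤ Q * 1 := by
              apply mul_le_mul_of_nonneg_left _ h0.le
              exact pow_le_one₀ h0.le h1.le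
        _ = Q := mul_one Q
      exact mul_le_mul ih h4 (Real.exp_pos _).le (qPoch_pos h0 h1 m).le
  refine le_trans ?_ (step k)
  apply Real.exp_le_exp.2
  rw [neg_le_neg_iff]
  have : ∑ j ∈ Finset.range k, Q * Q ^ j / (1 - Q) = (Q / (1-Q)) * ∑ j ∈ Finset.range k, Q ^ j := by
    rw [Finset.mul_sum]
    congr 1; ext j; ring
  rw [this]
  have hgeom : ∑ j ∈ Finset.range k, Q ^ j ≤ 1 / (1 - Q) := by
    have e : (Q ^ k - 1) / (Q - 1) = (1 - Q ^ k) / (1 - Q) := by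
      rw [div_eq_div_iff (by intro h; apply absurd h; intro h'; linarith [sub_eq_zero.1 h'] : Q - 1 ≠ 0) (by positivity : (1:ℝ) - Q ≠ 0)]
      ring
    rw [geom_sum_eq h1.ne k, e]
    have hQk : 0 ≤ Q ^ k := by positivity
    gcongr <;> linarith
  calc (Q / (1-Q)) * ∑ j ∈ Finset.range k, Q ^ j
      ≤ (Q / (1-Q)) * (1 / (1-Q)) := by
        apply mul_le_mul_of_nonneg_left hgeom (by positivity)
  _ = Q / ((1-Q)*(1-Q)) := by field_simp


noncomputable def Tq (Q : ℝ) (x : ℂ) (n : ℕ) : ℂ :=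
  ∑ k ∈ Finset.range (n + 1), ((qbinom Q n k : ℝ) : ℂ) * x ^ k

lemma T_rec {Q : ℝ} (h0 : 0 < Q) (h1 : Q < 1) (x : ℂ) (n : ℕ) :
    Tq Q x (n + 2) + (1 - (Q : ℂ) ^ (n + 1)) * x * Tq Q x n = (1 + x) * Tq Q x (n + 1) := by
  have h20 : ((qbinom Q (n+2) 0 : ℝ) : ℂ) = 1 := by rw [qbinom_zero h0 h1]; norm_num
  have h2t : ((qbinom Q (n+2) (n+2) : ℝ) : ℂ) = 1 := by rw [qbinom_self h0 h1]; norm_num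
  have h10 : ((qbinom Q (n+1) 0 : ℝ) : ℂ) = 1 := by rw [qbinom_zero h0 h1]; norm_num
  have h1t : ((qbinom Q (n+1) (n+1) : ℝ) : ℂ) = 1 := by rw [qbinom_self h0 h1]; norm_num
  have e2 : ∑ k ∈ Finset.range (n+1), ((qbinom Q (n+2) (k+1) : ℝ) : ℂ) * x ^ (k+1)
      = (∑ k ∈ Finset.range (n+1), ((qbinom Q (n+1) (k+1) : ℝ) : ℂ) * x ^ (k+1))
        + (∑ k ∈ Finset.range (n+1), ((qbinom Q (n+1) k : ℝ) : ℂ) * x ^ (k+1))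
        - (1 - (Q : ℂ) ^ (n+1)) * ∑ k ∈ Finset.range (n+1), ((qbinom Q n k : ℝ) : ℂ) * x ^ (k+1) := by
    rw [Finset.mul_sum, ← Finset.sum_add_distrib, ← Finset.sum_sub_distrib]
    refine Finset.sum_congr rfl fun k hk => ?_
    rw [qbinom_key h0 h1 (Finset.mem_range_succ_iff.mp hk)]
    push_cast
    ring
  have E1 : Tq Q x (n+2)
      = (∑ k ∈ Finset.range (n+1), ((qbinom Q (n+2) (k+1) : ℝ) : ℂ) * x ^ (k+1)) + x^(n+2) + 1 := by
    unfold Tq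
    rw [show n + 2 + 1 = (n + 2) + 1 from rfl, Finset.sum_range_succ' _ (n+2),
      Finset.sum_range_succ _ (n+1), h20, h2t]
    ring
  have E2 : Tq Q x (n+1)
      = (∑ k ∈ Finset.range (n+1), ((qbinom Q (n+1) (k+1) : ℝ) : ℂ) * x ^ (k+1)) + 1 := by
    unfold Tq
    rw [Finset.sum_range_succ' _ (n+1), h10]
    ring
  have E3 : x * Tq Q x (n+1)
      = (∑ k ∈ Finset.range (n+1), ((qbinom Q (n+1) k : ℝ) : ℂ) * x ^ (k+1)) + x^(n+2) := by
    unfold Tq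
    rw [Finset.mul_sum, Finset.sum_range_succ _ (n+1), h1t]
    rw [Finset.sum_congr rfl (fun k _ => by ring :
      ∀ k ∈ Finset.range (n+1), x * (((qbinom Q (n+1) k : ℝ) : ℂ) * x ^ k)
        = ((qbinom Q (n+1) k : ℝ) : ℂ) * x ^ (k+1))]
    ring
  have E4 : x * Tq Q x n = ∑ k ∈ Finset.range (n+1), ((qbinom Q n k : ℝ) : ℂ) * x ^ (k+1) := by
    unfold Tq
    rw [Finset.mul_sum]
    exact Finset.sum_congr rfl fun k _ => by ring
  linear_combination E1 + e2 - E2 - E3 + (1 - (Q:ℂ)^(n+1)) * E4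


lemma cpw_term (q : ℝ) (z : ℂ) (n k : ℕ) :
    cpw q (z * ((n : ℂ) - 2 * (k : ℂ)))
      = cpw q ((n : ℂ) * z) * (cpw q ((-2 : ℂ) * z)) ^ k := by
  unfold cpw
  rw [← Complex.exp_nat_mul, ← Complex.exp_add]
  congr 1
  ring

lemma pfun_eq (q : ℝ) (n : ℕ) (z : ℂ) :
    pfun q n z = ((q ^ n / Real.sqrt (qPoch (q ^ 2) (q ^ 2) n) : ℝ) : ℂ) *
      (cpw q ((n : ℂ) * z) * Tq (q ^ 2) (cpw q ((-2 : ℂ) * z)) n) := by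
  unfold pfun Tq
  congr 1
  rw [Finset.mul_sum]
  exact Finset.sum_congr rfl fun k _ => by rw [cpw_term]; ring

section eig
variable {q : ℝ} (hq0 : 0 < q) (hq1 : q < 1) (z : ℂ)

lemma sqrtP_pos (hq0 : 0 < q) (hq1 : q < 1) (m : ℕ) :
    0 < Real.sqrt (qPoch (q^2) (q^2) m) :=
  Real.sqrt_pos.2 (qPoch_pos (by positivity) (by nlinarith) m)

lemma u_pos (hq0 : 0 < q) (hq1 : q < 1) (j : ℕ) : (0:ℝ) < 1 - q ^ (2 * (j+1)) := by
  have h := one_sub_pow_pos (by positivity : (0:ℝ) < q^2) (by nlinarith) j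
  have e : q ^ (2 * (j+1)) = q^2 * (q^2)^j := by rw [pow_mul]; ring
  rw [e]; linarith

lemma A1 (hq0 : 0 < q) (hq1 : q < 1) (m : ℕ) :
    q⁻¹ * Real.sqrt (1 - q ^ (2 * (m+2))) * (q ^ (m+2) / Real.sqrt (qPoch (q^2) (q^2) (m+2)))
      = q ^ (m+1) / Real.sqrt (qPoch (q^2) (q^2) (m+1)) := by
  have hu := u_pos hq0 hq1 (m+1)
  have hP := qPoch_pos (by positivity : (0:ℝ) < q^2) (by nlinarith) (m+1)
  have e : qPoch (q^2) (q^2) (m+2) = qPoch (q^2) (q^2) (m+1) * (1 - q ^ (2*(m+2))) := by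
    rw [qPoch_succ]
    congr 1
    rw [pow_mul]
    ring
  rw [e, Real.sqrt_mul hP.le]
  have hs1 := Real.sqrt_pos.2 hP
  have hs2 := Real.sqrt_pos.2 hu
  field_simp
  ring

lemma A2 (hq0 : 0 < q) (hq1 : q < 1) (m : ℕ) :
    q * Real.sqrt (1 - q ^ (2 * (m+1))) * (q ^ m / Real.sqrt (qPoch (q^2) (q^2) m))
      = (1 - (q^2) ^ (m+1)) * (q ^ (m+1) / Real.sqrt (qPoch (q^2) (q^2) (m+1))) := by
  have hu := u_pos hq0 hq1 m
  have hP := qPoch_pos (by positivity : (0:ℝ) < q^2) (by nlinarith) m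
  have e : qPoch (q^2) (q^2) (m+1) = qPoch (q^2) (q^2) m * (1 - q ^ (2*(m+1))) := by
    rw [qPoch_succ]
    congr 1
    rw [pow_mul]
    ring
  have e2 : (1 : ℝ) - (q^2)^(m+1) = 1 - q ^ (2*(m+1)) := by rw [pow_mul]
  rw [e, e2, Real.sqrt_mul hP.le]
  have hs1 := Real.sqrt_pos.2 hP
  have hs2 := Real.sqrt_pos.2 hu
  have hss : Real.sqrt (1 - q ^ (2*(m+1))) * Real.sqrt (1 - q ^ (2*(m+1))) = 1 - q ^ (2*(m+1)) :=
    Real.mul_self_sqrt hu.le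
  generalize hsd : Real.sqrt (1 - q ^ (2*(m+1))) = s at hss hs2 ⊢
  rw [← hss]
  have hs0 : s ≠ 0 := hs2.ne'
  have hs1' : Real.sqrt (qPoch (q^2) (q^2) m) ≠ 0 := hs1.ne'
  field_simp
  ring

end eig

lemma cpw_mul_cpw (q : ℝ) (a b : ℂ) : cpw q a * cpw q b = cpw q (a + b) := by
  unfold cpw
  rw [← Complex.exp_add]
  congr 1
  ring

lemma eigS {q : ℝ} (hq0 : 0 < q) (hq1 : q < 1) (z : ℂ) (m : ℕ) :
    (q⁻¹ : ℂ) * ((Real.sqrt (1 - q ^ (2 * (m+2))) : ℝ) : ℂ) * pfun q (m+2) z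
      + (q : ℂ) * ((Real.sqrt (1 - q ^ (2 * (m+1))) : ℝ) : ℂ) * pfun q m z
    = (cpw q z + cpw q (-z)) * pfun q (m+1) z := by
  have hQ0 : (0:ℝ) < q ^ 2 := by positivity
  have hQ1 : q ^ 2 < 1 := by nlinarith
  rw [pfun_eq q (m+2) z, pfun_eq q m z, pfun_eq q (m+1) z]
  set x := cpw q ((-2 : ℂ) * z) with hxdef
  set w := cpw q z with hwdef
  set v := cpw q (-z) with hvdef
  set W := cpw q ((m : ℂ) * z) with hWdef
  have hW1 : cpw q (((m+1 : ℕ) : ℂ) * z) = W * w := by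
    rw [hWdef, hwdef, cpw_mul_cpw]
    congr 1
    push_cast
    ring
  have hW2 : cpw q (((m+2 : ℕ) : ℂ) * z) = W * w * w := by
    rw [hWdef, hwdef, cpw_mul_cpw, cpw_mul_cpw]
    congr 1
    push_cast
    ring
  have hx : x * (w * w) = 1 := by
    rw [hxdef, hwdef, cpw_mul_cpw, cpw_mul_cpw, show (-2:ℂ) * z + (z + z) = 0 by ring]
    simp [cpw, Complex.exp_zero]
  have hw : w * v = 1 := by
    rw [hwdef, hvdef, cpw_mul_cpw, show z + -z = 0 by ring]
    simp [cpw, Complex.exp_zero]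
  have hT := T_rec hQ0 hQ1 x m
  have A1c : (q : ℂ)⁻¹ * ((Real.sqrt (1 - q ^ (2 * (m+2))) : ℝ) : ℂ)
        * ((q ^ (m+2) / Real.sqrt (qPoch (q^2) (q^2) (m+2)) : ℝ) : ℂ)
      = ((q ^ (m+1) / Real.sqrt (qPoch (q^2) (q^2) (m+1)) : ℝ) : ℂ) := by
    exact_mod_cast congrArg (Complex.ofReal) (A1 hq0 hq1 m)
  have A2c : (q : ℂ) * ((Real.sqrt (1 - q ^ (2 * (m+1))) : ℝ) : ℂ)
        * ((q ^ m / Real.sqrt (qPoch (q^2) (q^2) m) : ℝ) : ℂ)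
      = (1 - ((q:ℂ)^2) ^ (m+1)) * ((q ^ (m+1) / Real.sqrt (qPoch (q^2) (q^2) (m+1)) : ℝ) : ℂ) := by
    have := congrArg (Complex.ofReal) (A2 hq0 hq1 m)
    push_cast at this
    push_cast
    linear_combination this
  rw [hW1, hW2]
  set c1 : ℂ := ((q ^ (m+1) / Real.sqrt (qPoch (q^2) (q^2) (m+1)) : ℝ) : ℂ) with hc1
  set T2 := Tq (q^2) x (m+2)
  set T1 := Tq (q^2) x (m+1)
  set T0 := Tq (q^2) x m
  push_cast at A1c A2c ⊢
  push_cast at hT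
  linear_combination (W * w * w * T2) * A1c + (W * T0) * A2c + (c1 * W * w * w) * hT
    - ((1 - (q:ℂ)^(2*(m+1))) * c1 * W * T0) * hx + (c1 * W * T1) * hw
    + (W * c1 * T1) * hx - 2 * (W * c1 * T1) * hw

lemma pfun_zero (q : ℝ) (z : ℂ) (hq0 : 0 < q) (hq1 : q < 1) : pfun q 0 z = 1 := by
  unfold pfun qbinom qPoch
  simp [cpw]

lemma pfun_one (q : ℝ) (z : ℂ) (hq0 : 0 < q) (hq1 : q < 1) :
    pfun q 1 z = ((q / Real.sqrt (1 - q ^ 2) : ℝ) : ℂ) * (cpw q z + cpw q (-z)) := by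
  have hQ0 : (0:ℝ) < q ^ 2 := by positivity
  have hQ1 : q ^ 2 < 1 := by nlinarith
  unfold pfun
  rw [Finset.sum_range_succ, Finset.sum_range_succ, Finset.sum_range_zero]
  have hb0 : qbinom (q^2) 1 0 = 1 := qbinom_zero hQ0 hQ1 1
  have hb1 : qbinom (q^2) 1 1 = 1 := qbinom_self hQ0 hQ1 1
  have hP1 : qPoch (q^2) (q^2) 1 = 1 - q ^ 2 := by
    rw [show (1:ℕ) = 0 + 1 from rfl, qPoch_succ]
    simp [qPoch]
  rw [hb0, hb1, hP1]
  push_cast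
  rw [show z * (1 - 2 * 0) = z by ring, show z * (1 - 2 * 1) = -z by ring]
  ring

lemma eig0 {q : ℝ} (hq0 : 0 < q) (hq1 : q < 1) (z : ℂ) :
    (q⁻¹ : ℂ) * ((Real.sqrt (1 - q ^ (2 * (0+1))) : ℝ) : ℂ) * pfun q 1 z
      = (cpw q z + cpw q (-z)) * pfun q 0 z := by
  have hQ1 : q ^ 2 < 1 := by nlinarith
  rw [pfun_zero q z hq0 hq1, pfun_one q z hq0 hq1]
  have hs : Real.sqrt (1 - q ^ 2) > 0 := Real.sqrt_pos.2 (by nlinarith)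
  have hcoef : q⁻¹ * Real.sqrt (1 - q ^ (2 * (0+1))) * (q / Real.sqrt (1 - q ^ 2)) = 1 := by
    norm_num
    field_simp
  have hcoefc : (q⁻¹ : ℂ) * ((Real.sqrt (1 - q ^ (2 * (0+1))) : ℝ) : ℂ)
      * ((q / Real.sqrt (1 - q ^ 2) : ℝ) : ℂ) = 1 := by
    exact_mod_cast congrArg Complex.ofReal hcoef
  linear_combination (cpw q z + cpw q (-z)) * hcoefc

lemma cpw_norm (q : ℝ) (hq0 : 0 < q) (w : ℂ) : ‖cpw q w‖ = Real.exp (w.re * Real.log q) := by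
  rw [cpw, Complex.norm_exp]
  congr 1
  simp [Complex.mul_re]

lemma pfun_bound {q : ℝ} (hq0 : 0 < q) (hq1 : q < 1) (z : ℂ) (n : ℕ) :
    ‖pfun q n z‖ ≤ Real.exp (q^2 / ((1 - q^2) * (1 - q^2))) ^ 3 * ((n : ℝ) + 1)
      * (q * Real.exp (|z.re| * (-Real.log q))) ^ n := by
  have hQ0 : (0:ℝ) < q ^ 2 := by positivity
  have hQ1 : q ^ 2 < 1 := by nlinarith
  set A : ℝ := q^2 / ((1 - q^2) * (1 - q^2)) with hA
  have hA0 : 0 ≤ A := by rw [hA]; exact div_nonneg hQ0.le (by nlinarith)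
  have hcP : ∀ m, Real.exp (-A) ≤ qPoch (q^2) (q^2) m := fun m => qPoch_lower hQ0 hQ1 m
  have hexp : Real.exp A * Real.exp (-A) = 1 := by
    rw [← Real.exp_add, add_neg_cancel, Real.exp_zero]
  set E : ℝ := Real.exp (|z.re| * (-Real.log q)) with hE
  have hE0 : (0:ℝ) < E := Real.exp_pos _
  have hlog : Real.log q < 0 := Real.log_neg hq0 hq1
  -- bound on each cpw term
  have hcpw : ∀ k ∈ Finset.range (n+1), ‖cpw q (z * ((n : ℂ) - 2 * (k : ℂ)))‖ ≤ E ^ n := by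
    intro k hk
    have hk' : k ≤ n := Finset.mem_range_succ_iff.mp hk
    rw [cpw_norm q hq0]
    have hre : (z * ((n : ℂ) - 2 * (k : ℂ))).re = z.re * ((n : ℝ) - 2 * k) := by
      simp [Complex.mul_re]
    rw [hre, show E ^ n = Real.exp ((n : ℝ) * (|z.re| * (-Real.log q))) by
      rw [hE, ← Real.exp_nat_mul]]
    apply Real.exp_le_exp.2
    have h1 : z.re * ((n : ℝ) - 2 * k) * Real.log q ≤ |z.re * ((n : ℝ) - 2 * k) * Real.log q| :=
      le_abs_self _
    rw [abs_mul, abs_mul, abs_of_neg hlog] at h1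
    have h2 : |(n : ℝ) - 2 * k| ≤ (n : ℝ) := by
      rw [abs_le]
      constructor
      · have : (k : ℝ) ≤ n := by exact_mod_cast hk'
        linarith
      · have : (0:ℝ) ≤ k := Nat.cast_nonneg k
        linarith
    calc z.re * ((n : ℝ) - 2 * k) * Real.log q
        ≤ |z.re| * |(n : ℝ) - 2 * k| * -Real.log q := h1
      _ ≤ |z.re| * (n : ℝ) * -Real.log q := by
          apply mul_le_mul_of_nonneg_right _ (by linarith)
          exact mul_le_mul_of_nonneg_left h2 (abs_nonneg _)
      _ = (n : ℝ) * (|z.re| * -Real.log q) := by ring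
  -- bound on qbinom
  have hB : ∀ k, |qbinom (q^2) n k| ≤ Real.exp A ^ 2 := by
    intro k
    have hPn := qPoch_pos hQ0 hQ1 n
    have hPk := qPoch_pos hQ0 hQ1 k
    have hPnk := qPoch_pos hQ0 hQ1 (n - k)
    have hBpos : 0 ≤ qbinom (q^2) n k := by
      unfold qbinom; positivity
    rw [abs_of_nonneg hBpos]
    unfold qbinom
    rw [div_le_iff₀ (by positivity)]
    have h1 : Real.exp (-A) * Real.exp (-A) ≤ qPoch (q^2) (q^2) k * qPoch (q^2) (q^2) (n - k) :=
      mul_le_mul (hcP k) (hcP (n - k)) (Real.exp_pos _).le hPk.le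
    have h2 : Real.exp A ^ 2 * (Real.exp (-A) * Real.exp (-A))
        ≤ Real.exp A ^ 2 * (qPoch (q^2) (q^2) k * qPoch (q^2) (q^2) (n - k)) :=
      mul_le_mul_of_nonneg_left h1 (by positivity)
    have h3 : Real.exp A ^ 2 * (Real.exp (-A) * Real.exp (-A)) = 1 := by
      rw [show Real.exp A ^ 2 * (Real.exp (-A) * Real.exp (-A))
        = (Real.exp A * Real.exp (-A)) ^ 2 by ring, hexp, one_pow]
    have h4 := qPoch_le_one hQ0 hQ1 n
    linarith
  -- bound on the sum
  have hsum : ‖∑ k ∈ Finset.range (n+1),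
      (qbinom (q^2) n k : ℂ) * cpw q (z * ((n : ℂ) - 2 * (k : ℂ)))‖
      ≤ ((n : ℝ) + 1) * (Real.exp A ^ 2 * E ^ n) := by
    calc ‖∑ k ∈ Finset.range (n+1), (qbinom (q^2) n k : ℂ) * cpw q (z * ((n:ℂ) - 2*(k:ℂ)))‖
        ≤ ∑ k ∈ Finset.range (n+1), ‖(qbinom (q^2) n k : ℂ) * cpw q (z * ((n:ℂ) - 2*(k:ℂ)))‖ :=
          norm_sum_le _ _
      _ ≤ ∑ k ∈ Finset.range (n+1), Real.exp A ^ 2 * E ^ n := by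
          apply Finset.sum_le_sum
          intro k hk
          rw [norm_mul, Complex.norm_real, Real.norm_eq_abs]
          exact mul_le_mul (hB k) (hcpw k hk) (norm_nonneg _) (by positivity)
      _ = ((n : ℝ) + 1) * (Real.exp A ^ 2 * E ^ n) := by
          rw [Finset.sum_const, Finset.card_range]
          push_cast
          ring
  -- bound on the coefficient
  have hcoef : ‖((q ^ n / Real.sqrt (qPoch (q^2) (q^2) n) : ℝ) : ℂ)‖ ≤ q ^ n * Real.exp A := by
    rw [Complex.norm_real, Real.norm_eq_abs, abs_of_nonneg (by positivity)]
    have hPn := qPoch_pos hQ0 hQ1 n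
    have hsq : Real.exp (-A) ≤ Real.sqrt (qPoch (q^2) (q^2) n) := by
      rw [show Real.exp (-A) = Real.sqrt (Real.exp (-A) ^ 2) by
        rw [Real.sqrt_sq (Real.exp_pos _).le]]
      apply Real.sqrt_le_sqrt
      have hle1 : Real.exp (-A) ≤ 1 := Real.exp_le_one_iff.2 (by linarith)
      nlinarith [hcP n, Real.exp_pos (-A)]
    rw [div_le_iff₀ (Real.sqrt_pos.2 hPn)]
    have : 1 ≤ Real.exp A * Real.sqrt (qPoch (q^2) (q^2) n) := by
      calc (1:ℝ) = Real.exp A * Real.exp (-A) := hexp.symm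
        _ ≤ Real.exp A * Real.sqrt (qPoch (q^2) (q^2) n) :=
            mul_le_mul_of_nonneg_left hsq (Real.exp_pos _).le
    nlinarith [pow_pos hq0 n]
  calc ‖pfun q n z‖ = ‖((q ^ n / Real.sqrt (qPoch (q^2) (q^2) n) : ℝ) : ℂ)‖
        * ‖∑ k ∈ Finset.range (n+1), (qbinom (q^2) n k : ℂ) * cpw q (z * ((n:ℂ) - 2*(k:ℂ)))‖ := by
        rw [pfun, norm_mul]
    _ ≤ (q ^ n * Real.exp A) * (((n : ℝ) + 1) * (Real.exp A ^ 2 * E ^ n)) :=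
        mul_le_mul hcoef hsum (norm_nonneg _) (by positivity)
    _ = Real.exp A ^ 3 * ((n : ℝ) + 1) * (q * E) ^ n := by
        rw [mul_pow]
        ring

lemma pfun_mem {q : ℝ} (hq0 : 0 < q) (hq1 : q < 1) {z : ℂ}
    (hz0 : -1 < z.re) (hz1 : z.re < 1) : Memℓp (fun n : ℕ => pfun q n z) 2 := by
  apply memℓp_gen
  set C : ℝ := Real.exp (q^2 / ((1 - q^2) * (1 - q^2))) ^ 3 with hC
  have hC0 : 0 < C := by positivity
  set r : ℝ := q * Real.exp (|z.re| * (-Real.log q)) with hr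
  have hr0 : 0 < r := by positivity
  have hlog : Real.log q < 0 := Real.log_neg hq0 hq1
  have hzre : |z.re| < 1 := abs_lt.2 ⟨hz0, hz1⟩
  have hr1 : r < 1 := by
    have e : r = Real.exp (Real.log q + |z.re| * (-Real.log q)) := by
      rw [Real.exp_add, Real.exp_log hq0, hr]
    rw [e]
    apply Real.exp_lt_one_iff.2
    nlinarith [mul_pos (by linarith : (0:ℝ) < 1 - |z.re|) (by linarith : (0:ℝ) < -Real.log q)]
  have hconv : (fun n : ℕ => ‖pfun q n z‖ ^ (2 : ENNReal).toReal)
      = fun n : ℕ => ‖pfun q n z‖ ^ (2 : ℕ) := by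
    funext n
    rw [show ((2 : ENNReal).toReal) = ((2 : ℕ) : ℝ) by norm_num, Real.rpow_natCast]
  rw [hconv]
  have hs2 : ‖r ^ 2‖ < 1 := by
    rw [Real.norm_eq_abs, abs_of_nonneg (by positivity)]
    nlinarith
  have h2 : Summable (fun n : ℕ => ((n:ℝ) ^ 2) * (r^2) ^ n) := by
    simpa using summable_pow_mul_geometric_of_norm_lt_one 2 hs2
  have h1 : Summable (fun n : ℕ => ((n:ℝ) ^ 1) * (r^2) ^ n) := by
    simpa using summable_pow_mul_geometric_of_norm_lt_one 1 hs2
  have h0 : Summable (fun n : ℕ => (r^2) ^ n) :=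
    summable_geometric_of_norm_lt_one hs2
  have hg : Summable (fun n : ℕ => (C * ((n:ℝ) + 1) * r ^ n) ^ 2) := by
    have := (((h2.add (h1.mul_left 2)).add h0).mul_left (C ^ 2))
    apply this.congr
    intro n
    ring
  apply Summable.of_nonneg_of_le (fun n => by positivity) _ hg
  intro n
  have hb := pfun_bound hq0 hq1 z n
  calc ‖pfun q n z‖ ^ 2 ≤ (C * ((n:ℝ) + 1) * r ^ n) ^ 2 := by
        apply pow_le_pow_left₀ (norm_nonneg _) _ 2
        exact hb
    _ = (C * ((n:ℝ) + 1) * r ^ n) ^ 2 := rfl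

theorem stmt11 (q : ℝ) (hq0 : 0 < q) (hq1 : q < 1) (z : ℂ)
    (hz0 : -1 < z.re) (hz1 : z.re < 1) :
    Memℓp (fun n : ℕ => pfun q n z) 2 ∧
    ∀ a : lp (fun _ : ℕ => ℂ) 2 →L[ℂ] lp (fun _ : ℕ => ℂ) 2,
      (∀ ξ : lp (fun _ : ℕ => ℂ) 2, ∀ n : ℕ,
        (a ξ : ∀ _ : ℕ, ℂ) n = (Real.sqrt (1 - q ^ (2 * (n + 1))) : ℂ) * ξ (n + 1)) →
      ∀ η : lp (fun _ : ℕ => ℂ) 2, (∀ n : ℕ, (η : ∀ _ : ℕ, ℂ) n = pfun q n z) →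
        ((q⁻¹ : ℂ) • a + (q : ℂ) • ContinuousLinearMap.adjoint a) η =
          (cpw q z + cpw q (-z)) • η := by
  refine ⟨pfun_mem hq0 hq1 hz0 hz1, ?_⟩
  intro a ha η hη
  -- coordinates of the adjoint applied to η
  have hadj : ∀ m : ℕ, ((ContinuousLinearMap.adjoint a) η : ∀ _ : ℕ, ℂ) m
      = @inner ℂ _ _ (a (lp.single 2 m (1 : ℂ))) η := by
    intro m
    have h1 : @inner ℂ _ _ (lp.single 2 m (1 : ℂ)) ((ContinuousLinearMap.adjoint a) η)
        = ((ContinuousLinearMap.adjoint a) η : ∀ _ : ℕ, ℂ) m := by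
      rw [lp.inner_single_left]
      simp [RCLike.inner_apply]
    rw [← h1, ContinuousLinearMap.adjoint_inner_right]
  have hadj0 : ((ContinuousLinearMap.adjoint a) η : ∀ _ : ℕ, ℂ) 0 = 0 := by
    rw [hadj 0, lp.inner_eq_tsum]
    have h0 : ∀ i : ℕ, @inner ℂ _ _ ((a (lp.single 2 0 (1 : ℂ)) : ∀ _ : ℕ, ℂ) i) ((η : ∀ _ : ℕ, ℂ) i) = 0 := by
      intro i
      rw [ha (lp.single 2 0 (1 : ℂ)) i,
        lp.single_apply_ne (E := fun _ : ℕ => ℂ) 2 0 1 (show i + 1 ≠ 0 by omega)]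
      simp [RCLike.inner_apply]
    calc (∑' i : ℕ, @inner ℂ _ _ ((a (lp.single 2 0 (1 : ℂ)) : ∀ _ : ℕ, ℂ) i) ((η : ∀ _ : ℕ, ℂ) i))
        = ∑' _ : ℕ, (0 : ℂ) := tsum_congr h0
      _ = 0 := tsum_zero
  have hadjS : ∀ j : ℕ, ((ContinuousLinearMap.adjoint a) η : ∀ _ : ℕ, ℂ) (j + 1)
      = ((Real.sqrt (1 - q ^ (2 * (j + 1))) : ℝ) : ℂ) * pfun q j z := by
    intro j
    rw [hadj (j + 1), lp.inner_eq_tsum]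
    rw [tsum_eq_single j ?_]
    · rw [ha (lp.single 2 (j+1) (1 : ℂ)) j, lp.single_apply_self (E := fun _ : ℕ => ℂ)]
      rw [RCLike.inner_apply, hη j, mul_one, Complex.conj_ofReal]
      exact mul_comm _ _
    · intro i hij
      rw [ha (lp.single 2 (j+1) (1 : ℂ)) i,
        lp.single_apply_ne (E := fun _ : ℕ => ℂ) 2 (j+1) 1 (show i + 1 ≠ j + 1 by omega)]
      simp [RCLike.inner_apply]
  refine lp.ext (funext fun n => ?_)
  have lhs1 : (((q⁻¹ : ℂ) • a + (q : ℂ) • ContinuousLinearMap.adjoint a) η : ∀ _ : ℕ, ℂ) n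
      = (q⁻¹ : ℂ) * ((a η : ∀ _ : ℕ, ℂ) n)
        + (q : ℂ) * (((ContinuousLinearMap.adjoint a) η : ∀ _ : ℕ, ℂ) n) := by
    rw [ContinuousLinearMap.add_apply, ContinuousLinearMap.smul_apply,
      ContinuousLinearMap.smul_apply, lp.coeFn_add, Pi.add_apply,
      lp.coeFn_smul, lp.coeFn_smul, Pi.smul_apply, Pi.smul_apply, smul_eq_mul, smul_eq_mul]
  have rhs1 : (((cpw q z + cpw q (-z)) • η : lp (fun _ : ℕ => ℂ) 2) : ∀ _ : ℕ, ℂ) n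
      = (cpw q z + cpw q (-z)) * pfun q n z := by
    rw [lp.coeFn_smul, Pi.smul_apply, smul_eq_mul, hη n]
  rw [lhs1, rhs1, ha η n, hη (n + 1)]
  cases n with
  | zero =>
      rw [hadj0, mul_zero, add_zero]
      have := eig0 hq0 hq1 z
      calc (q⁻¹ : ℂ) * (((Real.sqrt (1 - q ^ (2 * (0 + 1))) : ℝ) : ℂ) * pfun q (0+1) z)
          = (q⁻¹ : ℂ) * ((Real.sqrt (1 - q ^ (2 * (0+1))) : ℝ) : ℂ) * pfun q 1 z := by ring_nf
        _ = (cpw q z + cpw q (-z)) * pfun q 0 z := this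
  | succ m =>
      rw [hadjS m]
      have := eigS hq0 hq1 z m
      calc (q⁻¹ : ℂ) * (((Real.sqrt (1 - q ^ (2 * (m + 1 + 1))) : ℝ) : ℂ) * pfun q (m+1+1) z)
            + (q : ℂ) * (((Real.sqrt (1 - q ^ (2 * (m + 1))) : ℝ) : ℂ) * pfun q m z)
          = (q⁻¹ : ℂ) * ((Real.sqrt (1 - q ^ (2 * (m+2))) : ℝ) : ℂ) * pfun q (m+2) z
            + (q : ℂ) * ((Real.sqrt (1 - q ^ (2 * (m+1))) : ℝ) : ℂ) * pfun q m z := by ring_nf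
        _ = (cpw q z + cpw q (-z)) * pfun q (m+1) z := this
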